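/- arXiv:2410.07623 — 4 statements merged into one kernel-verified Lean document; each statement's English description precedes it below -/
import Mathlib

section
/- Let (V, e) be an order unit space and let u ∈ V⁺ with ‖u‖ = 1 = ‖e − u‖. Then the following statements are equivalent: (1) both u and e − u have the order unit property in V; (2) for every v ∈ V with −u ≤ v ≤ u and every w ∈ V with −(e − u) ≤ w ≤ e − u, one has v ⊥∞ w; (3) u ⊥∞ w for every w ∈ V with −(e − u) ≤ w ≤ e − u, and (e − u) ⊥∞ v for every v ∈ V with −u ≤ v ≤ u. -/
section OrderUnit

variable {V : Type*} [NormedAddCommGroup V] [NormedSpace ℝ V] [PartialOrder V]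

/-- `x` is ∞-orthogonal to `y`: `‖x + k y‖ = max {‖x‖, ‖k y‖}` for all `k ∈ ℝ`. -/
def PerpInf (x y : V) : Prop :=
  ∀ k : ℝ, ‖x + k • y‖ = max ‖x‖ ‖k • y‖

/-- The norm of `V` is the order unit norm determined by the order unit `e`:
for every `v` and every `λ ≥ 0`, `‖v‖ ≤ λ` iff `-λ e ≤ v ≤ λ e`. -/
def IsOrderUnitNorm (e : V) : Prop :=
  ∀ (v : V) (t : ℝ), 0 ≤ t → (‖v‖ ≤ t ↔ -(t • e) ≤ v ∧ v ≤ t • e)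

/-- `u` has the order unit property: whenever `λ u + v ≥ 0` and `λ u - v ≥ 0` for some
`λ > 0`, also `‖v‖ u + v ≥ 0` and `‖v‖ u - v ≥ 0`. -/
def HasOUP (u : V) : Prop :=
  ∀ v : V, (∃ l : ℝ, 0 < l ∧ 0 ≤ l • u + v ∧ 0 ≤ l • u - v) →
    0 ≤ ‖v‖ • u + v ∧ 0 ≤ ‖v‖ • u - v

end OrderUnit

section Aux

variable {V : Type*} [NormedAddCommGroup V] [NormedSpace ℝ V] [PartialOrder V]

private lemma nonneg_of_eq' {x y : V} (h : 0 ≤ x) (he : x = y) : 0 ≤ y := he ▸ h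

private lemma le_iff_aux (hadd : ∀ a b c : V, b ≤ c → a + b ≤ a + c) (b c : V) :
    b ≤ c ↔ 0 ≤ c - b := by
  constructor
  · intro h
    have h2 := hadd (-b) b c h
    have e1 : -b + b = (0 : V) := by abel
    have e2 : -b + c = c - b := by abel
    rwa [e1, e2] at h2
  · intro h
    have h2 := hadd b 0 (c - b) h
    have e1 : b + (0 : V) = b := by abel
    have e2 : b + (c - b) = c := by abel
    rwa [e1, e2] at h2

private lemma nonneg_add' (hadd : ∀ a b c : V, b ≤ c → a + b ≤ a + c)
    {x y : V} (hx : 0 ≤ x) (hy : 0 ≤ y) : 0 ≤ x + y := by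
  have h1 := hadd x 0 y hy
  have e1 : x + (0 : V) = x := by abel
  rw [e1] at h1
  exact le_trans hx h1

private lemma perpInf_symm' (x y : V) (h : PerpInf x y) : PerpInf y x := by
  intro k
  rcases eq_or_ne k 0 with rfl | hk
  · simp
  · have h1 := h k⁻¹
    have e1 : y + k • x = k • (x + k⁻¹ • y) := by
      rw [smul_add, smul_inv_smul₀ hk, add_comm]
    rw [e1, norm_smul, h1, norm_smul, norm_smul, mul_max_of_nonneg _ _ (norm_nonneg k),
      ← mul_assoc, ← norm_mul, mul_inv_cancel₀ hk, norm_one, one_mul, max_comm]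

/-- Upper bound: if `-a•u ≤ x ≤ a•u` and `-b•u' ≤ y ≤ b•u'` with `u + u' = e`,
then `‖x + y‖ ≤ max a b`. -/
private lemma norm_add_le_max'
    (hadd : ∀ a b c : V, b ≤ c → a + b ≤ a + c)
    (hsmul : ∀ (t : ℝ) (v : V), 0 ≤ t → 0 ≤ v → 0 ≤ t • v)
    {e : V} (hnorm : IsOrderUnitNorm e) {u u' : V}
    (hu : 0 ≤ u) (hu' : 0 ≤ u') (hsum : u + u' = e)
    {x y : V} {a b : ℝ} (ha : 0 ≤ a) (hb : 0 ≤ b)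
    (h1 : 0 ≤ a • u + x) (h2 : 0 ≤ a • u - x)
    (h3 : 0 ≤ b • u' + y) (h4 : 0 ≤ b • u' - y) :
    ‖x + y‖ ≤ max a b := by
  set M := max a b with hM
  have hM0 : 0 ≤ M := le_trans ha (le_max_left _ _)
  have hMa : 0 ≤ M - a := sub_nonneg.mpr (le_max_left a b)
  have hMb : 0 ≤ M - b := sub_nonneg.mpr (le_max_right a b)
  have k1 : 0 ≤ (M - a) • u := hsmul _ _ hMa hu
  have k2 : 0 ≤ (M - b) • u' := hsmul _ _ hMb hu'
  have upper : x + y ≤ M • e := by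
    rw [le_iff_aux hadd]
    refine nonneg_of_eq' (nonneg_add' hadd (nonneg_add' hadd h2 h4) (nonneg_add' hadd k1 k2)) ?_
    rw [← hsum]
    module
  have lower : -(M • e) ≤ x + y := by
    rw [le_iff_aux hadd]
    refine nonneg_of_eq' (nonneg_add' hadd (nonneg_add' hadd h1 h3) (nonneg_add' hadd k1 k2)) ?_
    rw [← hsum]
    module
  exact (hnorm (x + y) M hM0).mpr ⟨lower, upper⟩

/-- From the two order unit properties, `∞`-orthogonality of the order intervals. -/
private lemma oup_perp'
    (hadd : ∀ a b c : V, b ≤ c → a + b ≤ a + c)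
    (hsmul : ∀ (t : ℝ) (v : V), 0 ≤ t → 0 ≤ v → 0 ≤ t • v)
    {e : V} (hnorm : IsOrderUnitNorm e) {u u' : V}
    (hu : 0 ≤ u) (hu' : 0 ≤ u') (hsum : u + u' = e)
    (o1 : HasOUP u) (o2 : HasOUP u')
    (v : V) (hv1 : -u ≤ v) (hv2 : v ≤ u)
    (w : V) (hw1 : -u' ≤ w) (hw2 : w ≤ u') : PerpInf v w := by
  intro k
  -- OUP bounds for v
  have hvp : 0 ≤ u + v := nonneg_of_eq' ((le_iff_aux hadd _ _).mp hv1) (by abel)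
  have hvm : 0 ≤ u - v := (le_iff_aux hadd _ _).mp hv2
  obtain ⟨hv1', hv2'⟩ := o1 v ⟨1, one_pos, nonneg_of_eq' hvp (by module),
    nonneg_of_eq' hvm (by module)⟩
  -- OUP bounds for k • w
  have hwp : 0 ≤ u' + w := nonneg_of_eq' ((le_iff_aux hadd _ _).mp hw1) (by abel)
  have hwm : 0 ≤ u' - w := (le_iff_aux hadd _ _).mp hw2
  have hkw : 0 ≤ |k| • u' + k • w ∧ 0 ≤ |k| • u' - k • w := by
    rcases le_or_gt 0 k with hk | hk
    · have p1 := hsmul k _ hk hwp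
      have p2 := hsmul k _ hk hwm
      rw [abs_of_nonneg hk]
      exact ⟨nonneg_of_eq' p1 (by module), nonneg_of_eq' p2 (by module)⟩
    · have hk' : 0 ≤ -k := by linarith
      have p1 := hsmul (-k) _ hk' hwm
      have p2 := hsmul (-k) _ hk' hwp
      rw [abs_of_neg hk]
      exact ⟨nonneg_of_eq' p1 (by module), nonneg_of_eq' p2 (by module)⟩
  obtain ⟨hw1', hw2'⟩ := o2 (k • w) ⟨|k| + 1, by positivity,
    nonneg_of_eq' (nonneg_add' hadd hkw.1 hu') (by module),
    nonneg_of_eq' (nonneg_add' hadd hkw.2 hu') (by module)⟩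
  -- upper bounds
  have h5 : ‖v + k • w‖ ≤ max ‖v‖ ‖k • w‖ :=
    norm_add_le_max' hadd hsmul hnorm hu hu' hsum (norm_nonneg v) (norm_nonneg _)
      hv1' hv2' hw1' hw2'
  have h6 : ‖v - k • w‖ ≤ max ‖v‖ ‖k • w‖ := by
    have := norm_add_le_max' hadd hsmul hnorm hu hu' hsum (norm_nonneg v)
      (norm_nonneg (k • w)) hv1' hv2' (x := v) (y := -(k • w))
      (nonneg_of_eq' hw2' (by module)) (nonneg_of_eq' hw1' (by module))
    rwa [← sub_eq_add_neg] at this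
  -- lower bound
  have e1 : ‖v‖ ≤ (‖v + k • w‖ + ‖v - k • w‖) / 2 := by
    have hv : v = (2⁻¹ : ℝ) • ((v + k • w) + (v - k • w)) := by module
    calc ‖v‖ = ‖(2⁻¹ : ℝ) • ((v + k • w) + (v - k • w))‖ := by rw [← hv]
    _ ≤ (2⁻¹ : ℝ) * (‖v + k • w‖ + ‖v - k • w‖) := by
        rw [norm_smul]
        gcongr
        · norm_num
        · exact norm_add_le _ _
    _ = (‖v + k • w‖ + ‖v - k • w‖) / 2 := by ring
  have e2 : ‖k • w‖ ≤ (‖v + k • w‖ + ‖v - k • w‖) / 2 := by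
    have hv : k • w = (2⁻¹ : ℝ) • ((v + k • w) - (v - k • w)) := by module
    calc ‖k • w‖ = ‖(2⁻¹ : ℝ) • ((v + k • w) - (v - k • w))‖ := by rw [← hv]
    _ ≤ (2⁻¹ : ℝ) * (‖v + k • w‖ + ‖v - k • w‖) := by
        rw [norm_smul]
        gcongr
        · norm_num
        · exact norm_sub_le _ _
    _ = (‖v + k • w‖ + ‖v - k • w‖) / 2 := by ring
  have h7 : max ‖v‖ ‖k • w‖ ≤ ‖v + k • w‖ := by
    have hA : max ‖v‖ ‖k • w‖ ≤ (‖v + k • w‖ + max ‖v‖ ‖k • w‖) / 2 :=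
      max_le (le_trans e1 (by linarith)) (le_trans e2 (by linarith))
    linarith
  exact le_antisymm h5 h7

/-- From `∞`-orthogonality with `u'` of the order interval of `u`, the order unit
property of `u`. -/
private lemma perp_oup'
    (hadd : ∀ a b c : V, b ≤ c → a + b ≤ a + c)
    (hsmul : ∀ (t : ℝ) (v : V), 0 ≤ t → 0 ≤ v → 0 ≤ t • v)
    {e : V} (hnorm : IsOrderUnitNorm e) {u u' : V}
    (hu : 0 ≤ u) (hu' : 0 ≤ u') (hsum : u + u' = e)
    (hnu : ‖u‖ = 1) (hnu' : ‖u'‖ = 1)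
    (P : ∀ v : V, -u ≤ v → v ≤ u → PerpInf v u') : HasOUP u := by
  intro v hv
  obtain ⟨l, hl, h1, h2⟩ := hv
  suffices key : ∀ x : V, 0 ≤ l • u + x → 0 ≤ l • u - x → 0 ≤ ‖x‖ • u - x by
    constructor
    · have := key (-v) (nonneg_of_eq' h2 (by module)) (nonneg_of_eq' h1 (by module))
      rw [norm_neg] at this
      exact nonneg_of_eq' this (by module)
    · exact key v h1 h2
  intro x hx1 hx2
  set a := ‖x‖ with ha
  have ha0 : 0 ≤ a := norm_nonneg x
  set r := l + a with hr
  have hr0 : 0 < r := by positivity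
  set s := 2 * l with hs
  have hs0 : 0 < s := by positivity
  set x₀ := l • u + x with hx₀
  have hx₀1 : 0 ≤ x₀ := hx1
  have hx₀2 : 0 ≤ s • u - x₀ := nonneg_of_eq' hx2 (by rw [hx₀, hs]; module)
  obtain ⟨v₀, hv₀⟩ : ∃ y : V, y = s⁻¹ • x₀ := ⟨_, rfl⟩
  have hsv₀ : s • v₀ = x₀ := by rw [hv₀, smul_inv_smul₀ (ne_of_gt hs0)]
  have hv₀1 : -u ≤ v₀ := by
    rw [le_iff_aux hadd]
    have p1 := hsmul s⁻¹ x₀ (by positivity) hx₀1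
    rw [← hv₀] at p1
    have p2 := nonneg_add' hadd p1 hu
    exact nonneg_of_eq' p2 (by module)
  have hv₀2 : v₀ ≤ u := by
    rw [le_iff_aux hadd]
    have p1 := hsmul s⁻¹ _ (by positivity) hx₀2
    refine nonneg_of_eq' p1 ?_
    rw [smul_sub, ← hv₀, smul_smul, inv_mul_cancel₀ (ne_of_gt hs0), one_smul]
  have hperp := P v₀ hv₀1 hv₀2 (r / s)
  have hX : x₀ + r • u' = s • (v₀ + (r / s) • u') := by
    rw [smul_add, hsv₀, smul_smul, mul_div_cancel₀ _ (ne_of_gt hs0)]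
  have hnv₀ : ‖x₀‖ = s * ‖v₀‖ := by
    rw [← hsv₀, norm_smul, Real.norm_of_nonneg hs0.le]
  have hnru' : ‖(r / s) • u'‖ = r / s := by
    rw [norm_smul, hnu', Real.norm_eq_abs, abs_of_pos (by positivity), mul_one]
  have hnormX : ‖x₀ + r • u'‖ = max ‖x₀‖ r := by
    rw [hX, norm_smul, hperp, hnru', Real.norm_eq_abs, abs_of_pos hs0,
      mul_max_of_nonneg _ _ (le_of_lt hs0), ← hnv₀, mul_div_cancel₀ _ (ne_of_gt hs0)]
  have hx₀norm : ‖x₀‖ ≤ r := by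
    calc ‖x₀‖ ≤ ‖l • u‖ + ‖x‖ := norm_add_le _ _
    _ = l + a := by rw [norm_smul, hnu, Real.norm_eq_abs, abs_of_pos hl, mul_one]
    _ = r := hr.symm
  have hle : ‖x₀ + r • u'‖ ≤ r := by
    rw [hnormX]
    exact max_le hx₀norm le_rfl
  have hfin := ((hnorm (x₀ + r • u') r (le_of_lt hr0)).mp hle).2
  rw [le_iff_aux hadd] at hfin
  refine nonneg_of_eq' hfin ?_
  rw [← hsum, hx₀, hr]
  module

end Aux
theorem orderProjection_tfae {V : Type*} [NormedAddCommGroup V] [NormedSpace ℝ V]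
    [PartialOrder V]
    (hadd : ∀ a b c : V, b ≤ c → a + b ≤ a + c)
    (hsmul : ∀ (t : ℝ) (v : V), 0 ≤ t → 0 ≤ v → 0 ≤ t • v)
    (e : V) (he : 0 ≤ e) (hnorm : IsOrderUnitNorm e)
    (u : V) (hu : 0 ≤ u) (hnu : ‖u‖ = 1) (hneu : ‖e - u‖ = 1) :
    ((HasOUP u ∧ HasOUP (e - u)) ↔
        (∀ v : V, -u ≤ v → v ≤ u →
          ∀ w : V, -(e - u) ≤ w → w ≤ e - u → PerpInf v w)) ∧
    ((∀ v : V, -u ≤ v → v ≤ u →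
          ∀ w : V, -(e - u) ≤ w → w ≤ e - u → PerpInf v w) ↔
        ((∀ w : V, -(e - u) ≤ w → w ≤ e - u → PerpInf u w) ∧
          (∀ v : V, -u ≤ v → v ≤ u → PerpInf (e - u) v))) := by
  have hsum : u + (e - u) = e := by abel
  have hsum' : (e - u) + u = e := by abel
  -- 0 ≤ e - u, from ‖u‖ ≤ 1
  have hu' : 0 ≤ e - u := by
    have h1 := ((hnorm u 1 zero_le_one).mp (le_of_eq hnu)).2
    rw [one_smul] at h1
    exact (le_iff_aux hadd u e).mp h1
  -- self-bounds
  have huu : -u ≤ u := by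
    rw [le_iff_aux hadd]
    exact nonneg_of_eq' (nonneg_add' hadd hu hu) (by module)
  have huu' : -(e - u) ≤ e - u := by
    rw [le_iff_aux hadd]
    exact nonneg_of_eq' (nonneg_add' hadd hu' hu') (by module)
  -- (1) → (2)
  have A : (HasOUP u ∧ HasOUP (e - u)) →
      (∀ v : V, -u ≤ v → v ≤ u →
        ∀ w : V, -(e - u) ≤ w → w ≤ e - u → PerpInf v w) := by
    rintro ⟨o1, o2⟩ v hv1 hv2 w hw1 hw2
    exact oup_perp' hadd hsmul hnorm hu hu' hsum o1 o2 v hv1 hv2 w hw1 hw2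
  -- (2) → (1)
  have B : (∀ v : V, -u ≤ v → v ≤ u →
      ∀ w : V, -(e - u) ≤ w → w ≤ e - u → PerpInf v w) →
      (HasOUP u ∧ HasOUP (e - u)) := by
    intro h
    constructor
    · exact perp_oup' hadd hsmul hnorm hu hu' hsum hnu hneu
        (fun v hv1 hv2 => h v hv1 hv2 (e - u) huu' le_rfl)
    · exact perp_oup' hadd hsmul hnorm hu' hu hsum' hneu hnu
        (fun w hw1 hw2 => perpInf_symm' _ _ (h u huu le_rfl w hw1 hw2))
  -- (2) → (3)
  have C : (∀ v : V, -u ≤ v → v ≤ u →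
      ∀ w : V, -(e - u) ≤ w → w ≤ e - u → PerpInf v w) →
      ((∀ w : V, -(e - u) ≤ w → w ≤ e - u → PerpInf u w) ∧
        (∀ v : V, -u ≤ v → v ≤ u → PerpInf (e - u) v)) := by
    intro h
    exact ⟨fun w hw1 hw2 => h u huu le_rfl w hw1 hw2,
      fun v hv1 hv2 => perpInf_symm' _ _ (h v hv1 hv2 (e - u) huu' le_rfl)⟩
  -- (3) → (2), via (3) → (1) → (2)
  have D : ((∀ w : V, -(e - u) ≤ w → w ≤ e - u → PerpInf u w) ∧
      (∀ v : V, -u ≤ v → v ≤ u → PerpInf (e - u) v)) →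
      (∀ v : V, -u ≤ v → v ≤ u →
        ∀ w : V, -(e - u) ≤ w → w ≤ e - u → PerpInf v w) := by
    rintro ⟨h1, h2⟩
    apply A
    constructor
    · exact perp_oup' hadd hsmul hnorm hu hu' hsum hnu hneu
        (fun v hv1 hv2 => perpInf_symm' _ _ (h2 v hv1 hv2))
    · exact perp_oup' hadd hsmul hnorm hu' hu hsum' hneu hnu
        (fun w hw1 hw2 => perpInf_symm' _ _ (h1 w hw1 hw2))
  exact ⟨⟨A, B⟩, ⟨C, D⟩⟩
end

section
/- Let (V, e) be an order unit space and let u, v, w ∈ V⁺ with ‖u‖ = ‖v‖ = ‖w‖ = 1 = ‖e − u‖ = ‖e − v‖ = ‖e − w‖ and u = v + w, and suppose u has the order unit property in V. Then v and w both have the order unit property in V if and only if v is extensively ∞-orthogonal to w, i.e., v₁ ⊥∞ w₁ for every v₁ ∈ V with −v ≤ v₁ ≤ v and every w₁ ∈ V with −w ≤ w₁ ≤ w. -/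
theorem hasOUP_sum_iff {V : Type*} [NormedAddCommGroup V] [NormedSpace ℝ V]
    [PartialOrder V]
    (hadd : ∀ a b c : V, b ≤ c → a + b ≤ a + c)
    (hsmul : ∀ (t : ℝ) (v : V), 0 ≤ t → 0 ≤ v → 0 ≤ t • v)
    (e : V) (he : 0 ≤ e) (hnorm : IsOrderUnitNorm e)
    (u v w : V) (hu : 0 ≤ u) (hv : 0 ≤ v) (hw : 0 ≤ w)
    (hnu : ‖u‖ = 1) (hnv : ‖v‖ = 1) (hnw : ‖w‖ = 1)
    (hneu : ‖e - u‖ = 1) (hnev : ‖e - v‖ = 1) (hnew : ‖e - w‖ = 1)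
    (huvw : u = v + w) (hOUP : HasOUP u) :
    (HasOUP v ∧ HasOUP w) ↔
      (∀ v₁ : V, -v ≤ v₁ → v₁ ≤ v → ∀ w₁ : V, -w ≤ w₁ → w₁ ≤ w → PerpInf v₁ w₁) := by
  -- basic order facts
  have hsub : ∀ a b : V, a ≤ b ↔ 0 ≤ b - a := by
    intro a b
    constructor
    · intro h
      have h2 := hadd (-a) a b h
      simpa [neg_add_eq_sub] using h2
    · intro h
      have h2 := hadd a 0 (b - a) h
      simpa using h2
  have pos2 : ∀ a b : V, 0 ≤ a → 0 ≤ b → 0 ≤ a + b := by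
    intro a b ha hb
    have h2 := hadd a 0 b hb
    simp only [add_zero] at h2
    exact le_trans ha h2
  -- e - (v + w) is nonnegative
  have hue : 0 ≤ e - (v + w) := by
    have h1 : ‖u‖ ≤ 1 := hnu.le
    have h2 := ((hnorm u 1 one_pos.le).mp h1).2
    rw [one_smul, huvw] at h2
    exact (hsub _ _).mp h2
  constructor
  · rintro ⟨hOv, hOw⟩ v₁ hv₁l hv₁r w₁ hw₁l hw₁r k
    have hv₁p : 0 ≤ v + v₁ := by
      have h := (hsub (-v) v₁).mp hv₁l
      rwa [sub_neg_eq_add, add_comm] at h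
    have hv₁m : 0 ≤ v - v₁ := (hsub v₁ v).mp hv₁r
    have hw₁p : 0 ≤ w + w₁ := by
      have h := (hsub (-w) w₁).mp hw₁l
      rwa [sub_neg_eq_add, add_comm] at h
    have hw₁m : 0 ≤ w - w₁ := (hsub w₁ w).mp hw₁r
    obtain ⟨hA1, hA2⟩ := hOv v₁ ⟨1, one_pos, by simpa using hv₁p, by simpa using hv₁m⟩
    obtain ⟨hB1, hB2⟩ := hOw w₁ ⟨1, one_pos, by simpa using hw₁p, by simpa using hw₁m⟩
    -- transfer the OUP bounds to k • w₁
    have hkB1 : 0 ≤ ‖k • w₁‖ • w + k • w₁ := by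
      rcases le_total 0 k with hk | hk
      · have h := hsmul k _ hk hB1
        have e1 : ‖k • w₁‖ • w + k • w₁ = k • (‖w₁‖ • w + w₁) := by
          rw [norm_smul, Real.norm_eq_abs, abs_of_nonneg hk]; module
        rwa [e1]
      · have h := hsmul (-k) _ (by linarith) hB2
        have e1 : ‖k • w₁‖ • w + k • w₁ = (-k) • (‖w₁‖ • w - w₁) := by
          rw [norm_smul, Real.norm_eq_abs, abs_of_nonpos hk]; module
        rwa [e1]
    have hkB2 : 0 ≤ ‖k • w₁‖ • w - k • w₁ := by
      rcases le_total 0 k with hk | hk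
      · have h := hsmul k _ hk hB2
        have e1 : ‖k • w₁‖ • w - k • w₁ = k • (‖w₁‖ • w - w₁) := by
          rw [norm_smul, Real.norm_eq_abs, abs_of_nonneg hk]; module
        rwa [e1]
      · have h := hsmul (-k) _ (by linarith) hB1
        have e1 : ‖k • w₁‖ • w - k • w₁ = (-k) • (‖w₁‖ • w + w₁) := by
          rw [norm_smul, Real.norm_eq_abs, abs_of_nonpos hk]; module
        rwa [e1]
    set a := ‖v₁‖ with ha_def
    set b := ‖k • w₁‖ with hb_def
    have hM0 : 0 ≤ max a b := le_trans (norm_nonneg v₁) (le_max_left a b)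
    refine le_antisymm ?_ ?_
    · -- upper bound: ‖v₁ + k • w₁‖ ≤ M
      refine ((hnorm (v₁ + k • w₁) (max a b) hM0).mpr ⟨?_, ?_⟩)
      · rw [hsub, sub_neg_eq_add]
        have e1 : v₁ + k • w₁ + (max a b) • e =
            (a • v + v₁) + (b • w + k • w₁) + (max a b - a) • v + (max a b - b) • w
              + (max a b) • (e - (v + w)) := by module
        rw [e1]
        exact pos2 _ _ (pos2 _ _ (pos2 _ _ (pos2 _ _ hA1 hkB1)
          (hsmul _ _ (sub_nonneg.mpr (le_max_left a b)) hv))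
          (hsmul _ _ (sub_nonneg.mpr (le_max_right a b)) hw)) (hsmul _ _ hM0 hue)
      · rw [hsub]
        have e1 : (max a b) • e - (v₁ + k • w₁) =
            (a • v - v₁) + (b • w - k • w₁) + (max a b - a) • v + (max a b - b) • w
              + (max a b) • (e - (v + w)) := by module
        rw [e1]
        exact pos2 _ _ (pos2 _ _ (pos2 _ _ (pos2 _ _ hA2 hkB2)
          (hsmul _ _ (sub_nonneg.mpr (le_max_left a b)) hv))
          (hsmul _ _ (sub_nonneg.mpr (le_max_right a b)) hw)) (hsmul _ _ hM0 hue)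
    · -- lower bound: M ≤ ‖v₁ + k • w₁‖
      set t := ‖v₁ + k • w₁‖ with ht_def
      have ht0 : 0 ≤ t := norm_nonneg _
      obtain ⟨hT1, hT2⟩ := (hnorm (v₁ + k • w₁) t ht0).mp le_rfl
      have hT1' : 0 ≤ t • e + (v₁ + k • w₁) := by
        have h := (hsub _ _).mp hT1
        rwa [sub_neg_eq_add, add_comm] at h
      have hT2' : 0 ≤ t • e - (v₁ + k • w₁) := (hsub _ _).mp hT2
      rcases le_total b a with hba | hab
      · rw [max_eq_left hba]
        -- show a ≤ t
        have h1 : 0 ≤ (t + a) • e - (2 : ℝ) • v₁ := by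
          have e1 : (t + a) • e - (2 : ℝ) • v₁ =
              (t • e - (v₁ + k • w₁)) + (b • w + k • w₁) + (a • v - v₁)
                + a • (e - (v + w)) + (a - b) • w := by module
          rw [e1]
          exact pos2 _ _ (pos2 _ _ (pos2 _ _ (pos2 _ _ hT2' hkB1) hA2)
            (hsmul _ _ (norm_nonneg _) hue)) (hsmul _ _ (by linarith) hw)
        have h2 : 0 ≤ (t + a) • e + (2 : ℝ) • v₁ := by
          have e1 : (t + a) • e + (2 : ℝ) • v₁ =
              (t • e + (v₁ + k • w₁)) + (b • w - k • w₁) + (a • v + v₁)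
                + a • (e - (v + w)) + (a - b) • w := by module
          rw [e1]
          exact pos2 _ _ (pos2 _ _ (pos2 _ _ (pos2 _ _ hT1' hkB2) hA1)
            (hsmul _ _ (norm_nonneg _) hue)) (hsmul _ _ (by linarith) hw)
        have hta0 : (0:ℝ) ≤ t + a := by positivity
        have hn : ‖(2:ℝ) • v₁‖ ≤ t + a := by
          refine (hnorm _ _ hta0).mpr ⟨?_, ?_⟩
          · rw [hsub, sub_neg_eq_add]
            rwa [add_comm] at h2
          · rw [hsub]
            exact h1
        rw [norm_smul, Real.norm_ofNat] at hn
        linarith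
      · rw [max_eq_right hab]
        -- show b ≤ t
        have h1 : 0 ≤ (t + b) • e - (2 : ℝ) • (k • w₁) := by
          have e1 : (t + b) • e - (2 : ℝ) • (k • w₁) =
              (t • e - (v₁ + k • w₁)) + (a • v + v₁) + (b • w - k • w₁)
                + b • (e - (v + w)) + (b - a) • v := by module
          rw [e1]
          exact pos2 _ _ (pos2 _ _ (pos2 _ _ (pos2 _ _ hT2' hA1) hkB2)
            (hsmul _ _ (norm_nonneg _) hue)) (hsmul _ _ (by linarith) hv)
        have h2 : 0 ≤ (t + b) • e + (2 : ℝ) • (k • w₁) := by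
          have e1 : (t + b) • e + (2 : ℝ) • (k • w₁) =
              (t • e + (v₁ + k • w₁)) + (a • v - v₁) + (b • w + k • w₁)
                + b • (e - (v + w)) + (b - a) • v := by module
          rw [e1]
          exact pos2 _ _ (pos2 _ _ (pos2 _ _ (pos2 _ _ hT1' hA2) hkB1)
            (hsmul _ _ (norm_nonneg _) hue)) (hsmul _ _ (by linarith) hv)
        have htb0 : (0:ℝ) ≤ t + b := by positivity
        have hn : ‖(2:ℝ) • (k • w₁)‖ ≤ t + b := by
          refine (hnorm _ _ htb0).mpr ⟨?_, ?_⟩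
          · rw [hsub, sub_neg_eq_add]
            rwa [add_comm] at h2
          · rw [hsub]
            exact h1
        rw [norm_smul, Real.norm_ofNat] at hn
        linarith
  · intro hperp
    have hww : -w ≤ w := by
      rw [hsub, sub_neg_eq_add]; exact pos2 _ _ hw hw
    have hvv : -v ≤ v := by
      rw [hsub, sub_neg_eq_add]; exact pos2 _ _ hv hv
    constructor
    · -- HasOUP v
      intro x hx
      obtain ⟨l, hl, h1, h2⟩ := hx
      by_cases hx0 : x = 0
      · subst hx0; simp
      have hm : 0 < ‖x‖ := norm_pos_iff.mpr hx0
      have hv₁l : -v ≤ l⁻¹ • x := by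
        rw [hsub, sub_neg_eq_add, add_comm]
        have h := hsmul l⁻¹ _ (inv_nonneg.mpr hl.le) h1
        have e1 : l⁻¹ • (l • v + x) = v + l⁻¹ • x := by
          rw [smul_add, smul_smul, inv_mul_cancel₀ hl.ne', one_smul]
        rwa [e1] at h
      have hv₁r : l⁻¹ • x ≤ v := by
        rw [hsub]
        have h := hsmul l⁻¹ _ (inv_nonneg.mpr hl.le) h2
        have e1 : l⁻¹ • (l • v - x) = v - l⁻¹ • x := by
          rw [smul_sub, smul_smul, inv_mul_cancel₀ hl.ne', one_smul]
        rwa [e1] at h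
      have hP := hperp (l⁻¹ • x) hv₁l hv₁r w hww le_rfl
      have hperp' : ∀ c : ℝ, ‖x + c • w‖ = max ‖x‖ |c| := by
        intro c
        have h := hP (c / l)
        have e1 : x + c • w = l • (l⁻¹ • x + (c / l) • w) := by
          rw [smul_add, smul_smul, mul_inv_cancel₀ hl.ne', one_smul, smul_smul,
            mul_div_cancel₀ _ hl.ne']
        calc ‖x + c • w‖ = l * ‖l⁻¹ • x + (c / l) • w‖ := by
              rw [e1, norm_smul, Real.norm_eq_abs, abs_of_pos hl]
          _ = l * max ‖l⁻¹ • x‖ ‖(c / l) • w‖ := by rw [h]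
          _ = max ‖x‖ |c| := by
              rw [norm_smul, norm_smul, hnw, norm_inv, Real.norm_eq_abs,
                Real.norm_eq_abs, abs_of_pos hl, abs_div, abs_of_pos hl,
                mul_max_of_nonneg _ _ hl.le, mul_one]
              congr 1
              · field_simp
              · field_simp
      have hxp : ‖x + ‖x‖ • w‖ = ‖x‖ := by
        rw [hperp', abs_of_nonneg (norm_nonneg x), max_self]
      have hxm : ‖x - ‖x‖ • w‖ = ‖x‖ := by
        have e1 : x - ‖x‖ • w = x + (-‖x‖) • w := by module
        rw [e1, hperp', abs_neg, abs_of_nonneg (norm_nonneg x), max_self]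
      -- apply OUP of u
      have happ1 := hOUP (x + ‖x‖ • w) ⟨l + ‖x‖, by positivity, ?_, ?_⟩
      rotate_left
      · rw [huvw]
        have e1 : (l + ‖x‖) • (v + w) + (x + ‖x‖ • w) =
            (l • v + x) + ‖x‖ • v + (l + 2 * ‖x‖) • w := by module
        rw [e1]
        exact pos2 _ _ (pos2 _ _ h1 (hsmul _ _ (norm_nonneg _) hv))
          (hsmul _ _ (by positivity) hw)
      · rw [huvw]
        have e1 : (l + ‖x‖) • (v + w) - (x + ‖x‖ • w) =
            (l • v - x) + ‖x‖ • v + l • w := by module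
        rw [e1]
        exact pos2 _ _ (pos2 _ _ h2 (hsmul _ _ (norm_nonneg _) hv))
          (hsmul _ _ hl.le hw)
      have happ2 := hOUP (x - ‖x‖ • w) ⟨l + ‖x‖, by positivity, ?_, ?_⟩
      rotate_left
      · rw [huvw]
        have e1 : (l + ‖x‖) • (v + w) + (x - ‖x‖ • w) =
            (l • v + x) + ‖x‖ • v + l • w := by module
        rw [e1]
        exact pos2 _ _ (pos2 _ _ h1 (hsmul _ _ (norm_nonneg _) hv))
          (hsmul _ _ hl.le hw)
      · rw [huvw]
        have e1 : (l + ‖x‖) • (v + w) - (x - ‖x‖ • w) =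
            (l • v - x) + ‖x‖ • v + (l + 2 * ‖x‖) • w := by module
        rw [e1]
        exact pos2 _ _ (pos2 _ _ h2 (hsmul _ _ (norm_nonneg _) hv))
          (hsmul _ _ (by positivity) hw)
      constructor
      · have h := happ2.1
        rw [hxm, huvw] at h
        have e1 : ‖x‖ • (v + w) + (x - ‖x‖ • w) = ‖x‖ • v + x := by module
        rwa [e1] at h
      · have h := happ1.2
        rw [hxp, huvw] at h
        have e1 : ‖x‖ • (v + w) - (x + ‖x‖ • w) = ‖x‖ • v - x := by module
        rwa [e1] at h
    · -- HasOUP w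
      intro x hx
      obtain ⟨l, hl, h1, h2⟩ := hx
      by_cases hx0 : x = 0
      · subst hx0; simp
      have hm : 0 < ‖x‖ := norm_pos_iff.mpr hx0
      have hw₁l : -w ≤ l⁻¹ • x := by
        rw [hsub, sub_neg_eq_add, add_comm]
        have h := hsmul l⁻¹ _ (inv_nonneg.mpr hl.le) h1
        have e1 : l⁻¹ • (l • w + x) = w + l⁻¹ • x := by
          rw [smul_add, smul_smul, inv_mul_cancel₀ hl.ne', one_smul]
        rwa [e1] at h
      have hw₁r : l⁻¹ • x ≤ w := by
        rw [hsub]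
        have h := hsmul l⁻¹ _ (inv_nonneg.mpr hl.le) h2
        have e1 : l⁻¹ • (l • w - x) = w - l⁻¹ • x := by
          rw [smul_sub, smul_smul, inv_mul_cancel₀ hl.ne', one_smul]
        rwa [e1] at h
      have hP := hperp v hvv le_rfl (l⁻¹ • x) hw₁l hw₁r
      -- ‖x + ‖x‖ • v‖ = ‖x‖ and ‖x - ‖x‖ • v‖ = ‖x‖
      have hperp' : ∀ c : ℝ, c ≠ 0 → |c| = ‖x‖ → ‖x + c • v‖ = ‖x‖ := by
        intro c hc hcx
        have h := hP (l / c)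
        have hl0 : l ≠ 0 := hl.ne'
        have e1 : x + c • v = c • (v + (l / c) • l⁻¹ • x) := by
          match_scalars <;> field_simp
        have habs : |l| ≠ 0 := by positivity
        have hcabs : |c| ≠ 0 := abs_ne_zero.mpr hc
        have h2 : ‖v + (l / c) • l⁻¹ • x‖ = 1 := by
          rw [h, hnv]
          have h3 : ‖(l / c) • l⁻¹ • x‖ = 1 := by
            rw [norm_smul, norm_smul, norm_inv, Real.norm_eq_abs, Real.norm_eq_abs,
              ← hcx, abs_div]
            field_simp
          rw [h3, max_self]
        rw [e1, norm_smul, Real.norm_eq_abs, hcx, h2, mul_one]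
      have hxp : ‖x + ‖x‖ • v‖ = ‖x‖ := hperp' ‖x‖ hm.ne' (abs_of_nonneg hm.le)
      have hxm : ‖x - ‖x‖ • v‖ = ‖x‖ := by
        have e1 : x - ‖x‖ • v = x + (-‖x‖) • v := by module
        rw [e1]
        exact hperp' (-‖x‖) (by simpa using hm.ne') (by rw [abs_neg, abs_of_nonneg hm.le])
      have happ1 := hOUP (x + ‖x‖ • v) ⟨l + ‖x‖, by positivity, ?_, ?_⟩
      rotate_left
      · rw [huvw]
        have e1 : (l + ‖x‖) • (v + w) + (x + ‖x‖ • v) =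
            (l • w + x) + (l + 2 * ‖x‖) • v + ‖x‖ • w := by module
        rw [e1]
        exact pos2 _ _ (pos2 _ _ h1 (hsmul _ _ (by positivity) hv))
          (hsmul _ _ (norm_nonneg _) hw)
      · rw [huvw]
        have e1 : (l + ‖x‖) • (v + w) - (x + ‖x‖ • v) =
            (l • w - x) + l • v + ‖x‖ • w := by module
        rw [e1]
        exact pos2 _ _ (pos2 _ _ h2 (hsmul _ _ hl.le hv))
          (hsmul _ _ (norm_nonneg _) hw)
      have happ2 := hOUP (x - ‖x‖ • v) ⟨l + ‖x‖, by positivity, ?_, ?_⟩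
      rotate_left
      · rw [huvw]
        have e1 : (l + ‖x‖) • (v + w) + (x - ‖x‖ • v) =
            (l • w + x) + l • v + ‖x‖ • w := by module
        rw [e1]
        exact pos2 _ _ (pos2 _ _ h1 (hsmul _ _ hl.le hv))
          (hsmul _ _ (norm_nonneg _) hw)
      · rw [huvw]
        have e1 : (l + ‖x‖) • (v + w) - (x - ‖x‖ • v) =
            (l • w - x) + (l + 2 * ‖x‖) • v + ‖x‖ • w := by module
        rw [e1]
        exact pos2 _ _ (pos2 _ _ h2 (hsmul _ _ (by positivity) hv))
          (hsmul _ _ (norm_nonneg _) hw)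
      constructor
      · have h := happ2.1
        rw [hxm, huvw] at h
        have e1 : ‖x‖ • (v + w) + (x - ‖x‖ • v) = ‖x‖ • w + x := by module
        rwa [e1] at h
      · have h := happ1.2
        rw [hxp, huvw] at h
        have e1 : ‖x‖ • (v + w) - (x + ‖x‖ • v) = ‖x‖ • w - x := by module
        rwa [e1] at h
end

section
/- Let (V, e) be an order unit space. If u ∈ V⁺ has the order unit property in V and ‖u‖ ≤ 1, then u is an extreme point of the convex set V₁⁺ = {w ∈ V⁺ : ‖w‖ ≤ 1}. -/
section OrderUnit

variable {V : Type*} [NormedAddCommGroup V] [NormedSpace ℝ V] [PartialOrder V]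

lemma aux_v_eq_zero
    (hadd : ∀ a b c : V, b ≤ c → a + b ≤ a + c)
    (hsmul : ∀ (t : ℝ) (v : V), 0 ≤ t → 0 ≤ v → 0 ≤ t • v)
    (e : V) (he : 0 ≤ e) (hnorm : IsOrderUnitNorm e)
    (u : V) (hu : 0 ≤ u) (hOUP : HasOUP u)
    (v : V) (c : ℝ) (hc : 0 < c)
    (hxp : 0 ≤ u + v) (hyp : 0 ≤ u - c • v)
    (hxe : u + v ≤ e) (hye : u - c • v ≤ e) : v = 0 := by
  have hle : ∀ p q : V, p ≤ q ↔ 0 ≤ q - p := by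
    intro p q
    constructor
    · intro h
      have := hadd (-p) p q h
      simpa [neg_add_cancel, sub_eq_neg_add] using this
    · intro h
      have := hadd p 0 (q - p) h
      simpa using this
  have hpos_add : ∀ p q : V, 0 ≤ p → 0 ≤ q → 0 ≤ p + q := by
    intro p q hp hq
    have := hadd p 0 q hq
    simp only [add_zero] at this
    exact le_trans hp this
  -- OUP hypothesis for v, with l = 1 + 1/c
  have h1 : 0 ≤ (1 + 1/c) • u + v := by
    have hcu : 0 ≤ (1/c) • u := hsmul _ _ (by positivity) hu
    have h := hpos_add _ _ hxp hcu
    have heq : (u + v) + (1/c) • u = (1 + 1/c) • u + v := by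
      rw [add_smul, one_smul]; abel
    rwa [heq] at h
  have h2 : 0 ≤ (1 + 1/c) • u - v := by
    have h3 : 0 ≤ (1/c) • (u - c • v) := hsmul _ _ (by positivity) hyp
    have h4 : (1/c) • (u - c • v) = (1/c) • u - v := by
      rw [smul_sub, smul_smul]
      rw [show (1/c) * c = 1 by field_simp, one_smul]
    rw [h4] at h3
    have h := hpos_add _ _ h3 hu
    have heq : ((1/c) • u - v) + u = (1 + 1/c) • u - v := by
      rw [add_smul, one_smul]; abel
    rwa [heq] at h
  obtain ⟨hsv1, hsv2⟩ := hOUP v ⟨1 + 1/c, by positivity, h1, h2⟩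
  by_contra hvne
  have hspos : 0 < ‖v‖ := norm_pos_iff.mpr hvne
  generalize hs : ‖v‖ = s at hsv1 hsv2 hspos
  have hs0 : 0 ≤ s := hspos.le
  have hb1 : 0 ≤ e - (u + v) := (hle _ _).mp hxe
  have hb2 : 0 ≤ e - (u - c • v) := (hle _ _).mp hye
  have h1s : (0:ℝ) < 1 + s := by linarith
  have hcs : (0:ℝ) < 1 + c * s := by positivity
  -- first combination : v ≤ (s/(1+s)) • e
  have ht0 : (0:ℝ) ≤ s / (1 + s) := by positivity
  have ht1 : (0:ℝ) ≤ 1 - s / (1 + s) := by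
    rw [sub_nonneg, div_le_one h1s]; linarith
  have hc1 : 0 ≤ (s/(1+s)) • e - v := by
    have h := hpos_add _ _ (hsmul _ _ ht0 hb1) (hsmul _ _ ht1 hsv2)
    have heq : (s/(1+s)) • (e - (u + v)) + (1 - s/(1+s)) • (s • u - v)
        = (s/(1+s)) • e - v := by
      have h1s' : (1:ℝ) + s ≠ 0 := ne_of_gt h1s
      match_scalars <;> field_simp <;> ring
    rwa [heq] at h
  -- second combination : -v ≤ (s/(1+c*s)) • e
  have hr0 : (0:ℝ) ≤ s / (1 + c * s) := by positivity
  have hr1 : (0:ℝ) ≤ 1 - c * s / (1 + c * s) := by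
    rw [sub_nonneg, div_le_one hcs]; linarith
  have hc2 : 0 ≤ (s/(1+c*s)) • e + v := by
    have h := hpos_add _ _ (hsmul _ _ hr0 hb2) (hsmul _ _ hr1 hsv1)
    have heq : (s/(1+c*s)) • (e - (u - c • v)) + (1 - c*s/(1+c*s)) • (s • u + v)
        = (s/(1+c*s)) • e + v := by
      have hcs' : (1:ℝ) + c * s ≠ 0 := ne_of_gt hcs
      have hc' : c ≠ 0 := ne_of_gt hc
      match_scalars <;> field_simp <;> ring
    rwa [heq] at h
  -- combine
  have hts' : s / (1 + s) < s := by
    rw [div_lt_iff₀ h1s]; nlinarith [mul_pos hspos hspos]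
  have hrs' : s / (1 + c * s) < s := by
    rw [div_lt_iff₀ hcs]; nlinarith [mul_pos (mul_pos hc hspos) hspos]
  set lam : ℝ := max (s/(1+s)) (s/(1+c*s)) with hlam
  have hlam0 : 0 ≤ lam := le_trans ht0 (le_max_left _ _)
  have hupper : v ≤ lam • e := by
    rw [hle]
    have hd : 0 ≤ (lam - s/(1+s)) • e :=
      hsmul _ _ (by simp [hlam]) he
    have h := hpos_add _ _ hd hc1
    have heq : (lam - s/(1+s)) • e + ((s/(1+s)) • e - v) = lam • e - v := by
      rw [sub_smul]; abel
    rwa [heq] at h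
  have hlower : -(lam • e) ≤ v := by
    rw [hle]
    have hd : 0 ≤ (lam - s/(1+c*s)) • e :=
      hsmul _ _ (by simp [hlam]) he
    have h := hpos_add _ _ hd hc2
    have heq : (lam - s/(1+c*s)) • e + ((s/(1+c*s)) • e + v) = v - -(lam • e) := by
      rw [sub_smul]; abel
    rwa [heq] at h
  have hnv : s ≤ lam := by
    rw [← hs]
    exact (hnorm v lam hlam0).mpr ⟨hlower, hupper⟩
  have : lam < s := max_lt hts' hrs'
  linarith

end OrderUnit
theorem hasOUP_mem_extremePoints {V : Type*} [NormedAddCommGroup V] [NormedSpace ℝ V]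
    [PartialOrder V]
    (hadd : ∀ a b c : V, b ≤ c → a + b ≤ a + c)
    (hsmul : ∀ (t : ℝ) (v : V), 0 ≤ t → 0 ≤ v → 0 ≤ t • v)
    (e : V) (he : 0 ≤ e) (hnorm : IsOrderUnitNorm e)
    (u : V) (hu : 0 ≤ u) (hOUP : HasOUP u) (hnu : ‖u‖ ≤ 1) :
    u ∈ Set.extremePoints ℝ {w : V | 0 ≤ w ∧ ‖w‖ ≤ 1} := by
  constructor
  · exact ⟨hu, hnu⟩
  rintro x ⟨hx0, hx1⟩ y ⟨hy0, hy1⟩ ⟨a, b, ha, hb, hab, hxy⟩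
  have hcb : b ≠ 0 := hb.ne'
  have hc : 0 < a / b := div_pos ha hb
  have hxv : x = u + (x - u) := by abel
  have hyv : y = u - (a/b) • (x - u) := by
    apply smul_right_injective V hcb
    show b • y = b • (u - (a/b) • (x - u))
    have hby : b • y = u - a • x := by rw [← hxy]; abel
    rw [hby, smul_sub, smul_smul]
    rw [show b * (a/b) = a by field_simp]
    rw [smul_sub]
    have hbu : b • u = u - a • u := by
      rw [show b = 1 - a by linarith, sub_smul, one_smul]
    rw [hbu]
    abel
  have hx1' : x ≤ (1:ℝ) • e := ((hnorm x 1 zero_le_one).mp hx1).2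
  have hy1' : y ≤ (1:ℝ) • e := ((hnorm y 1 zero_le_one).mp hy1).2
  rw [one_smul] at hx1' hy1'
  have hxp : 0 ≤ u + (x - u) := hxv ▸ hx0
  have hyp : 0 ≤ u - (a/b) • (x - u) := hyv ▸ hy0
  have hxe : u + (x - u) ≤ e := hxv ▸ hx1'
  have hye : u - (a/b) • (x - u) ≤ e := hyv ▸ hy1'
  have hv0 : x - u = 0 := aux_v_eq_zero hadd hsmul e he hnorm u hu hOUP
    (x - u) (a/b) hc hxp hyp hxe hye
  have hxu : x = u := by
    have := sub_eq_zero.mp hv0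
    exact this
  exact hxu
end

section
/- Let (V, e) be an order unit space and let u ∈ V⁺ with ‖u‖ = 1 = ‖e − u‖ be an order projection in V. If v ∈ V satisfies λ u + v ∈ V⁺ and λ u − v ∈ V⁺ for some λ > 0, and w ∈ V satisfies μ (e − u) + w ∈ V⁺ and μ (e − u) − w ∈ V⁺ for some μ > 0, then ‖v + w‖ = max{‖v‖, ‖w‖}. -/
namespace OrderProjAux

variable {V : Type*} [NormedAddCommGroup V] [NormedSpace ℝ V] [PartialOrder V]

lemma le_iff' (hadd : ∀ a b c : V, b ≤ c → a + b ≤ a + c) {x y : V} :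
    x ≤ y ↔ 0 ≤ y - x := by
  constructor
  · intro h
    have h1 := hadd (-x) x y h
    have h2 : (-x) + x = 0 := by abel
    have h3 : (-x) + y = y - x := by abel
    rwa [h2, h3] at h1
  · intro h
    have h1 := hadd x 0 (y - x) h
    have h2 : x + 0 = x := by abel
    have h3 : x + (y - x) = y := by abel
    rwa [h2, h3] at h1

lemma addpos (hadd : ∀ a b c : V, b ≤ c → a + b ≤ a + c) {a b : V}
    (ha : 0 ≤ a) (hb : 0 ≤ b) : 0 ≤ a + b := by
  have h1 := hadd a 0 b hb
  have h2 : a + 0 = a := by abel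
  rw [h2] at h1
  exact le_trans ha h1

lemma epos (hadd : ∀ a b c : V, b ≤ c → a + b ≤ a + c)
    (hsmul : ∀ (t : ℝ) (v : V), 0 ≤ t → 0 ≤ v → 0 ≤ t • v)
    {e : V} (he : 0 ≤ e) (hene : e ≠ 0) {c : ℝ} (h : 0 ≤ c • e) : 0 ≤ c := by
  by_contra hc
  push_neg at hc
  have h1 : (0:ℝ) ≤ -c⁻¹ := by
    have : c⁻¹ < 0 := inv_neg''.mpr hc
    linarith
  have h2 := hsmul (-c⁻¹) (c • e) h1 h
  rw [smul_smul] at h2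
  have h3 : (-c⁻¹) * c = -1 := by rw [neg_mul, inv_mul_cancel₀ hc.ne]
  rw [h3, neg_one_smul] at h2
  have h4 : e ≤ 0 := by
    refine (le_iff' hadd).mpr ?_
    rwa [zero_sub]
  exact hene (le_antisymm h4 he)

noncomputable def pfun (e x : V) : ℝ := sInf {t : ℝ | x ≤ t • e}

lemma normS (hnorm : IsOrderUnitNorm (V := V) e) (x : V) :
    -(‖x‖ • e) ≤ x ∧ x ≤ ‖x‖ • e :=
  (hnorm x ‖x‖ (norm_nonneg x)).mp le_rfl

lemma neS (hnorm : IsOrderUnitNorm (V := V) e) (x : V) :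
    Set.Nonempty {t : ℝ | x ≤ t • e} :=
  ⟨‖x‖, (normS hnorm x).2⟩

lemma bddS (hadd : ∀ a b c : V, b ≤ c → a + b ≤ a + c)
    (hsmul : ∀ (t : ℝ) (v : V), 0 ≤ t → 0 ≤ v → 0 ≤ t • v)
    {e : V} (he : 0 ≤ e) (hnorm : IsOrderUnitNorm e) (hene : e ≠ 0) (x : V) :
    BddBelow {t : ℝ | x ≤ t • e} := by
  refine ⟨-‖x‖, fun t ht => ?_⟩
  have h1 : -(‖x‖ • e) ≤ t • e := le_trans (normS hnorm x).1 ht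
  have h2 : 0 ≤ t • e - -(‖x‖ • e) := (le_iff' hadd).mp h1
  have h3 : t • e - -(‖x‖ • e) = (t + ‖x‖) • e := by module
  rw [h3] at h2
  have := epos hadd hsmul he hene h2
  linarith

lemma pfun_le (hadd : ∀ a b c : V, b ≤ c → a + b ≤ a + c)
    (hsmul : ∀ (t : ℝ) (v : V), 0 ≤ t → 0 ≤ v → 0 ≤ t • v)
    {e : V} (he : 0 ≤ e) (hnorm : IsOrderUnitNorm e) (hene : e ≠ 0)
    {x : V} {t : ℝ} (h : x ≤ t • e) : pfun e x ≤ t :=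
  csInf_le (bddS hadd hsmul he hnorm hene x) h

lemma pfun_le_norm (hadd : ∀ a b c : V, b ≤ c → a + b ≤ a + c)
    (hsmul : ∀ (t : ℝ) (v : V), 0 ≤ t → 0 ≤ v → 0 ≤ t • v)
    {e : V} (he : 0 ≤ e) (hnorm : IsOrderUnitNorm e) (hene : e ≠ 0)
    (x : V) : pfun e x ≤ ‖x‖ :=
  pfun_le hadd hsmul he hnorm hene (normS hnorm x).2

lemma le_of_pfun_lt (hadd : ∀ a b c : V, b ≤ c → a + b ≤ a + c)
    (hsmul : ∀ (t : ℝ) (v : V), 0 ≤ t → 0 ≤ v → 0 ≤ t • v)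
    {e : V} (he : 0 ≤ e) (hnorm : IsOrderUnitNorm e)
    {x : V} {t : ℝ} (h : pfun e x < t) : x ≤ t • e := by
  obtain ⟨s, hs, hst⟩ := exists_lt_of_csInf_lt (neS hnorm x) h
  have h2 : 0 ≤ (t - s) • e := hsmul _ _ (by linarith) he
  have h3 : t • e - s • e = (t - s) • e := by module
  have h4 : s • e ≤ t • e := (le_iff' hadd).mpr (by rw [h3]; exact h2)
  exact le_trans hs h4

lemma pfun_zero_nonneg (hadd : ∀ a b c : V, b ≤ c → a + b ≤ a + c)
    (hsmul : ∀ (t : ℝ) (v : V), 0 ≤ t → 0 ≤ v → 0 ≤ t • v)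
    {e : V} (he : 0 ≤ e) (hnorm : IsOrderUnitNorm e) (hene : e ≠ 0) :
    0 ≤ pfun e (0 : V) :=
  le_csInf (neS hnorm 0) fun _ ht => epos hadd hsmul he hene ht

lemma pfun_add (hadd : ∀ a b c : V, b ≤ c → a + b ≤ a + c)
    (hsmul : ∀ (t : ℝ) (v : V), 0 ≤ t → 0 ≤ v → 0 ≤ t • v)
    {e : V} (he : 0 ≤ e) (hnorm : IsOrderUnitNorm e) (hene : e ≠ 0)
    (y z : V) : pfun e (y + z) ≤ pfun e y + pfun e z := by
  have hmem : ∀ s t : ℝ, y ≤ s • e → z ≤ t • e → y + z ≤ (s + t) • e := by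
    intro s t hs ht
    have h1 : 0 ≤ s • e - y := (le_iff' hadd).mp hs
    have h2 : 0 ≤ t • e - z := (le_iff' hadd).mp ht
    have h3 := addpos hadd h1 h2
    have h4 : (s • e - y) + (t • e - z) = (s + t) • e - (y + z) := by module
    rw [h4] at h3
    exact (le_iff' hadd).mpr h3
  have h1 : ∀ t ∈ {t : ℝ | z ≤ t • e}, pfun e (y + z) - t ≤ pfun e y := by
    intro t ht
    refine le_csInf (neS hnorm y) fun s hs => ?_
    have := pfun_le hadd hsmul he hnorm hene (hmem s t hs ht)
    linarith
  have h2 : pfun e (y + z) - pfun e y ≤ pfun e z :=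
    le_csInf (neS hnorm z) fun t ht => by linarith [h1 t ht]
  linarith

lemma pfun_smul (hadd : ∀ a b c : V, b ≤ c → a + b ≤ a + c)
    (hsmul : ∀ (t : ℝ) (v : V), 0 ≤ t → 0 ≤ v → 0 ≤ t • v)
    {e : V} (he : 0 ≤ e) (hnorm : IsOrderUnitNorm e) (hene : e ≠ 0)
    {c : ℝ} (hc : 0 < c) (y : V) : pfun e (c • y) = c * pfun e y := by
  have hmono : ∀ (d : ℝ), 0 < d → ∀ (x : V) (t : ℝ), x ≤ t • e → d • x ≤ (d * t) • e := by
    intro d hd x t hx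
    have h1 : 0 ≤ t • e - x := (le_iff' hadd).mp hx
    have h2 := hsmul d _ hd.le h1
    have h3 : d • (t • e - x) = (d * t) • e - d • x := by module
    rw [h3] at h2
    exact (le_iff' hadd).mpr h2
  apply le_antisymm
  · have h1 : ∀ t ∈ {t : ℝ | y ≤ t • e}, pfun e (c • y) / c ≤ t := by
      intro t ht
      have h2 := pfun_le hadd hsmul he hnorm hene (hmono c hc y t ht)
      exact (div_le_iff₀ hc).mpr (h2.trans_eq (mul_comm c t))
    have h2 : pfun e (c • y) / c ≤ pfun e y := le_csInf (neS hnorm y) h1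
    calc pfun e (c • y) = c * (pfun e (c • y) / c) := by field_simp
      _ ≤ c * pfun e y := mul_le_mul_of_nonneg_left h2 hc.le
  · refine le_csInf (neS hnorm (c • y)) fun t ht => ?_
    have h2 : y ≤ (c⁻¹ * t) • e := by
      have h3 := hmono c⁻¹ (inv_pos.mpr hc) (c • y) t ht
      rwa [smul_smul, inv_mul_cancel₀ hc.ne', one_smul] at h3
    have h4 : pfun e y ≤ c⁻¹ * t := pfun_le hadd hsmul he hnorm hene h2
    calc c * pfun e y ≤ c * (c⁻¹ * t) := mul_le_mul_of_nonneg_left h4 hc.le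
      _ = t := by field_simp

lemma exists_g (hadd : ∀ a b c : V, b ≤ c → a + b ≤ a + c)
    (hsmul : ∀ (t : ℝ) (v : V), 0 ≤ t → 0 ≤ v → 0 ≤ t • v)
    {e : V} (he : 0 ≤ e) (hnorm : IsOrderUnitNorm e) (hene : e ≠ 0)
    (x : V) (hx : x ≠ 0) :
    ∃ g : V →ₗ[ℝ] ℝ, g x = pfun e x ∧ ∀ y, g y ≤ pfun e y := by
  set f : V →ₗ.[ℝ] ℝ := LinearPMap.mkSpanSingleton (K := ℝ) x (pfun e x) hx with hf
  have hz0 : 0 ≤ pfun e (0 : V) := pfun_zero_nonneg hadd hsmul he hnorm hene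
  have hdom : ∀ z : f.domain, f z ≤ pfun e (z : V) := by
    rintro ⟨z, hz⟩
    obtain ⟨c, rfl⟩ := Submodule.mem_span_singleton.mp hz
    have happ : f ⟨c • x, hz⟩ = c • pfun e x :=
      LinearPMap.mkSpanSingleton'_apply x (pfun e x) _ c hz
    rw [happ, smul_eq_mul]
    show c * pfun e x ≤ pfun e (c • x)
    rcases lt_trichotomy c 0 with h | h | h
    · have e2 : (-c) • (-x) = c • x := by module
      have e1 : pfun e ((-c) • (-x)) = (-c) * pfun e (-x) :=
        pfun_smul hadd hsmul he hnorm hene (by linarith) (-x)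
      have e3 : 0 ≤ pfun e x + pfun e (-x) := by
        have h0 : x + (-x) = (0 : V) := by abel
        have h5 := pfun_add hadd hsmul he hnorm hene x (-x)
        rw [h0] at h5
        linarith
      rw [← e2, e1]
      nlinarith [e3, h]
    · subst h
      simp only [zero_smul, zero_mul]
      exact hz0
    · rw [pfun_smul hadd hsmul he hnorm hene h x]
  obtain ⟨g, hg1, hg2⟩ := exists_extension_of_le_sublinear f (pfun e)
    (fun c hc y => pfun_smul hadd hsmul he hnorm hene hc y)
    (pfun_add hadd hsmul he hnorm hene) hdom
  refine ⟨g, ?_, hg2⟩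
  have hmem : x ∈ Submodule.span ℝ {x} := Submodule.mem_span_singleton_self x
  have h1 := hg1 ⟨x, hmem⟩
  have h2 : f ⟨x, hmem⟩ = pfun e x :=
    LinearPMap.mkSpanSingleton'_apply_self x (pfun e x) _ hmem
  exact h1.trans h2

lemma key (hadd : ∀ a b c : V, b ≤ c → a + b ≤ a + c)
    (hsmul : ∀ (t : ℝ) (v : V), 0 ≤ t → 0 ≤ v → 0 ≤ t • v)
    {e : V} (he : 0 ≤ e) (hnorm : IsOrderUnitNorm e) (hene : e ≠ 0)
    (u : V) (heu : 0 ≤ e - u) (hOu : HasOUP u) (hOe : HasOUP (e - u))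
    (v w : V)
    (hv : ∃ l : ℝ, 0 < l ∧ 0 ≤ l • u + v ∧ 0 ≤ l • u - v)
    (hw : ∃ m : ℝ, 0 < m ∧ 0 ≤ m • (e - u) + w ∧ 0 ≤ m • (e - u) - w) :
    ‖v‖ ≤ ‖v + w‖ := by
  rcases (norm_nonneg v).eq_or_lt with h0 | hα
  · rw [← h0]; exact norm_nonneg _
  obtain ⟨hv1, hv2⟩ := hOu v hv
  obtain ⟨hw1, hw2⟩ := hOe w hw
  -- choose a norming direction x ∈ {v, -v}
  have hmax : ‖v‖ ≤ max (pfun e v) (pfun e (-v)) := by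
    by_contra hcon
    push_neg at hcon
    have hmlt : max (max (pfun e v) (pfun e (-v))) 0 < ‖v‖ := max_lt hcon hα
    set t := (max (max (pfun e v) (pfun e (-v))) 0 + ‖v‖) / 2 with htdef
    have h0t : 0 ≤ t := by
      have := le_max_right (max (pfun e v) (pfun e (-v))) (0 : ℝ)
      simp only [htdef]; linarith
    have hpv : pfun e v < t := by
      have h1 := le_max_left (pfun e v) (pfun e (-v))
      have h2 := le_max_left (max (pfun e v) (pfun e (-v))) (0 : ℝ)
      simp only [htdef]; linarith
    have hpnv : pfun e (-v) < t := by
      have h1 := le_max_right (pfun e v) (pfun e (-v))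
      have h2 := le_max_left (max (pfun e v) (pfun e (-v))) (0 : ℝ)
      simp only [htdef]; linarith
    have hta : t < ‖v‖ := by simp only [htdef]; linarith
    have hb1 : v ≤ t • e := le_of_pfun_lt hadd hsmul he hnorm hpv
    have hb2 : -v ≤ t • e := le_of_pfun_lt hadd hsmul he hnorm hpnv
    have hb2' : -(t • e) ≤ v := by
      refine (le_iff' hadd).mpr ?_
      have habel : v - -(t • e) = t • e - -v := by abel
      rw [habel]
      exact (le_iff' hadd).mp hb2
    have := (hnorm v t h0t).mpr ⟨hb2', hb1⟩
    linarith
  obtain ⟨x, hxeq, hxu, hxcase⟩ :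
      ∃ x : V, pfun e x = ‖v‖ ∧ 0 ≤ ‖v‖ • u - x ∧ (x = v ∨ x = -v) := by
    rcases le_max_iff.mp hmax with h | h
    · exact ⟨v, le_antisymm (pfun_le_norm hadd hsmul he hnorm hene v) h, hv2, Or.inl rfl⟩
    · refine ⟨-v, le_antisymm ?_ h, ?_, Or.inr rfl⟩
      · have := pfun_le_norm hadd hsmul he hnorm hene (-v)
        rwa [norm_neg] at this
      · have heq : ‖v‖ • u - -v = ‖v‖ • u + v := by abel
        rw [heq]; exact hv1
  have hxne : x ≠ 0 := by
    rcases hxcase with rfl | rfl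
    · exact norm_pos_iff.mp hα
    · simpa using norm_pos_iff.mp hα
  obtain ⟨g, hgx, hgle⟩ := exists_g hadd hsmul he hnorm hene x hxne
  have habs : ∀ y : V, g y ≤ ‖y‖ := fun y =>
    (hgle y).trans (pfun_le_norm hadd hsmul he hnorm hene y)
  have gpos : ∀ z : V, 0 ≤ z → 0 ≤ g z := by
    intro z hz
    have h1 : g (-z) ≤ pfun e (-z) := hgle _
    have h2 : pfun e (-z) ≤ 0 := by
      refine pfun_le hadd hsmul he hnorm hene ?_
      rw [zero_smul]
      refine (le_iff' hadd).mpr ?_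
      have hzz : (0:V) - -z = z := by abel
      rwa [hzz]
    rw [map_neg] at h1
    linarith
  have hge1 : g e ≤ 1 := by
    have h1 : pfun e e ≤ 1 := pfun_le hadd hsmul he hnorm hene (by rw [one_smul])
    exact (hgle e).trans h1
  have hge2 : 1 ≤ g e := by
    have h1 : g (-e) ≤ pfun e (-e) := hgle _
    have h2 : pfun e (-e) ≤ -1 :=
      pfun_le hadd hsmul he hnorm hene (le_of_eq (neg_one_smul ℝ e).symm)
    rw [map_neg] at h1
    linarith
  have hgu_le : g u ≤ g e := by
    have h1 := gpos _ heu
    rw [map_sub] at h1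
    linarith
  have hgu_ge : 1 ≤ g u := by
    have h1 : 0 ≤ g (‖v‖ • u - x) := gpos _ hxu
    rw [map_sub, map_smul, smul_eq_mul, hgx, hxeq] at h1
    nlinarith
  have hgeu : g (e - u) = 0 := by
    rw [map_sub]; linarith
  have hgw : g w = 0 := by
    have h1 := gpos _ hw1
    have h2 := gpos _ hw2
    rw [map_add, map_smul, smul_eq_mul, hgeu, mul_zero, zero_add] at h1
    rw [map_sub, map_smul, smul_eq_mul, hgeu, mul_zero, zero_sub] at h2
    linarith
  have hgxv : g x = ‖v‖ := hgx.trans hxeq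
  rcases hxcase with h | h
  · have hgv : g v = ‖v‖ := h ▸ hgxv
    have h1 : g (v + w) = ‖v‖ := by rw [map_add, hgw, add_zero, hgv]
    have := habs (v + w)
    linarith
  · have hgv : g v = -‖v‖ := by
      have := hgxv
      rw [h, map_neg] at this
      linarith
    have h1 := habs (-(v + w))
    rw [map_neg, map_add, hgw, add_zero, hgv, norm_neg] at h1
    linarith

end OrderProjAux

theorem orderProjection_norm_add {V : Type*} [NormedAddCommGroup V] [NormedSpace ℝ V]
    [PartialOrder V]
    (hadd : ∀ a b c : V, b ≤ c → a + b ≤ a + c)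
    (hsmul : ∀ (t : ℝ) (v : V), 0 ≤ t → 0 ≤ v → 0 ≤ t • v)
    (e : V) (he : 0 ≤ e) (hnorm : IsOrderUnitNorm e)
    (u : V) (hu : 0 ≤ u) (hnu : ‖u‖ = 1) (hneu : ‖e - u‖ = 1)
    (hproj : HasOUP u ∧ HasOUP (e - u))
    (v w : V)
    (hv : ∃ l : ℝ, 0 < l ∧ 0 ≤ l • u + v ∧ 0 ≤ l • u - v)
    (hw : ∃ m : ℝ, 0 < m ∧ 0 ≤ m • (e - u) + w ∧ 0 ≤ m • (e - u) - w) :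
    ‖v + w‖ = max ‖v‖ ‖w‖ := by
  obtain ⟨hO1, hO2⟩ := hproj
  have hene : e ≠ 0 := by
    intro h
    have hb := (hnorm u ‖u‖ (norm_nonneg u)).mp le_rfl
    rw [h, smul_zero, neg_zero] at hb
    have hu0 : u = 0 := le_antisymm hb.2 hb.1
    rw [hu0, norm_zero] at hnu
    norm_num at hnu
  have heu : 0 ≤ e - u := by
    have h1 := ((hnorm u 1 zero_le_one).mp hnu.le).2
    rw [one_smul] at h1
    exact (OrderProjAux.le_iff' hadd).mp h1
  have h1 : ‖v‖ ≤ ‖v + w‖ :=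
    OrderProjAux.key hadd hsmul he hnorm hene u heu hO1 hO2 v w hv hw
  have h2 : ‖w‖ ≤ ‖v + w‖ := by
    have hO1' : HasOUP (e - (e - u)) := by rwa [sub_sub_cancel]
    have heu' : 0 ≤ e - (e - u) := by rwa [sub_sub_cancel]
    have hv' : ∃ m : ℝ, 0 < m ∧ 0 ≤ m • (e - (e - u)) + v ∧ 0 ≤ m • (e - (e - u)) - v := by
      simpa [sub_sub_cancel] using hv
    have := OrderProjAux.key hadd hsmul he hnorm hene (e - u) heu' hO2 hO1' w v hw hv'
    rwa [add_comm] at this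
  refine le_antisymm ?_ (max_le h1 h2)
  set M := max ‖v‖ ‖w‖ with hM
  have hM0 : 0 ≤ M := le_trans (norm_nonneg v) (le_max_left _ _)
  obtain ⟨hv1, hv2⟩ := hO1 v hv
  obtain ⟨hw1, hw2⟩ := hO2 w hw
  have e1 : 0 ≤ (M - ‖v‖) • u := hsmul _ _ (by simp [hM]) hu
  have e2 : 0 ≤ (M - ‖w‖) • (e - u) := hsmul _ _ (by simp [hM]) heu
  refine (hnorm (v + w) M hM0).mpr ⟨?_, ?_⟩
  · have hsum := OrderProjAux.addpos hadd
      (OrderProjAux.addpos hadd (OrderProjAux.addpos hadd hv1 hw1) e1) e2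
    have heq : (‖v‖ • u + v) + (‖w‖ • (e - u) + w) + (M - ‖v‖) • u + (M - ‖w‖) • (e - u)
        = (v + w) - -(M • e) := by module
    rw [heq] at hsum
    exact (OrderProjAux.le_iff' hadd).mpr hsum
  · have hsum := OrderProjAux.addpos hadd
      (OrderProjAux.addpos hadd (OrderProjAux.addpos hadd hv2 hw2) e1) e2
    have heq : (‖v‖ • u - v) + (‖w‖ • (e - u) - w) + (M - ‖v‖) • u + (M - ‖w‖) • (e - u)
        = M • e - (v + w) := by module
    rw [heq] at hsum
    exact (OrderProjAux.le_iff' hadd).mpr hsum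
end
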